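/- Let x₁,…,xₙ be points in a two-dimensional real normed space X. Then ft(x₁,…,xₙ) is a convex polygon that may degenerate to a segment or a point; that is, ft(x₁,…,xₙ) equals the convex hull of a finite nonempty set of points of X. -/

import Mathlib

/-- The Fermat–Torricelli set of a finite tuple of points: the set of points minimizing
the sum of distances to the given points. -/
noncomputable def ftSet {X : Type*} [NormedAddCommGroup X] {n : ℕ} (x : Fin n → X) : Set X :=
  {p | ∀ q : X, ∑ i, ‖p - x i‖ ≤ ∑ i, ‖q - x i‖}

open Set Module

section Aux
variable {X : Type*} [NormedAddCommGroup X] [NormedSpace ℝ X]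

lemma segment_of_line {K : Set X} (hne : K.Nonempty) (hK : IsCompact K) (hconv : Convex ℝ K)
    {c d : X} (hline : ∀ p ∈ K, ∃ t : ℝ, p = c + t • d) :
    ∃ a b, a ∈ K ∧ b ∈ K ∧ K = segment ℝ a b := by
  by_cases hd : d = 0
  · obtain ⟨p, hp⟩ := hne
    obtain ⟨t, ht⟩ := hline p hp
    have hpc : p = c := by simp [ht, hd]
    refine ⟨p, p, hp, hp, ?_⟩
    rw [segment_same]
    apply Subset.antisymm _ (by simp [hp])
    intro q hq
    obtain ⟨s, hs⟩ := hline q hq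
    simp [hs, hd, hpc, ht]
  · set T : Set ℝ := {t : ℝ | c + t • d ∈ K} with hT
    have hTne : T.Nonempty := by
      obtain ⟨p, hp⟩ := hne
      obtain ⟨t, ht⟩ := hline p hp
      exact ⟨t, by rw [mem_setOf_eq, ← ht]; exact hp⟩
    have hTclosed : IsClosed T :=
      IsClosed.preimage (by continuity) hK.isClosed
    have hTbdd : BddAbove T ∧ BddBelow T := by
      obtain ⟨R, hR⟩ := hK.isBounded.subset_closedBall 0
      have key : ∀ t ∈ T, |t| ≤ (R + ‖c‖) / ‖d‖ := by
        intro t ht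
        have h1 : ‖c + t • d‖ ≤ R := by simpa [dist_eq_norm] using hR ht
        have h2 : |t| * ‖d‖ ≤ R + ‖c‖ := by
          have h3 : ‖t • d‖ ≤ ‖c + t • d‖ + ‖c‖ := by
            calc ‖t • d‖ = ‖(c + t • d) - c‖ := by rw [add_sub_cancel_left]
            _ ≤ ‖c + t • d‖ + ‖c‖ := norm_sub_le _ _
          rw [norm_smul, Real.norm_eq_abs] at h3
          linarith
        rw [le_div_iff₀ (norm_pos_iff.mpr hd)]
        exact h2
      constructor
      · exact ⟨(R + ‖c‖) / ‖d‖, fun t ht => (abs_le.mp (key t ht)).2⟩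
      · exact ⟨-((R + ‖c‖) / ‖d‖), fun t ht => (abs_le.mp (key t ht)).1⟩
    have hTconv : Convex ℝ T := by
      intro t₁ h₁ t₂ h₂ a b ha hb hab
      show c + (a * t₁ + b * t₂) • d ∈ K
      have h4 : a • (c + t₁ • d) + b • (c + t₂ • d) = (a + b) • c + (a * t₁ + b * t₂) • d := by
        module
      have : c + (a * t₁ + b * t₂) • d = a • (c + t₁ • d) + b • (c + t₂ • d) := by
        rw [h4, hab, one_smul]
      rw [this]
      exact hconv h₁ h₂ ha hb hab
    set α := sInf T
    set β := sSup T
    have hα : α ∈ T := hTclosed.csInf_mem hTne hTbdd.2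
    have hβ : β ∈ T := hTclosed.csSup_mem hTne hTbdd.1
    have hTIcc : T = Icc α β := by
      apply Subset.antisymm
      · intro t ht
        exact ⟨csInf_le hTbdd.2 ht, le_csSup hTbdd.1 ht⟩
      · intro t ht
        exact hTconv.ordConnected.out hα hβ ht
    refine ⟨c + α • d, c + β • d, hα, hβ, ?_⟩
    apply Subset.antisymm
    · intro p hp
      obtain ⟨t, ht⟩ := hline p hp
      have htT : t ∈ T := by rw [hT, mem_setOf_eq, ← ht]; exact hp
      rw [hTIcc] at htT
      have : t ∈ segment ℝ α β := by
        rw [segment_eq_Icc (csInf_le_csSup hTne hTbdd.2 hTbdd.1)]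
        exact htT
      obtain ⟨a, b, ha, hb, hab, habt⟩ := this
      refine ⟨a, b, ha, hb, hab, ?_⟩
      have h5 : a • (c + α • d) + b • (c + β • d) = (a + b) • c + (a • α + b • β) • d := by
        simp only [smul_eq_mul]
        module
      rw [h5, hab, one_smul, habt, ← ht]
    · exact hconv.segment_subset hα hβ

lemma ker_span (hdim : finrank ℝ X = 2) (φ : X →L[ℝ] ℝ) (hφ : φ ≠ 0) :
    ∃ v : X, v ≠ 0 ∧ φ v = 0 ∧ ∀ w : X, φ w = 0 → ∃ t : ℝ, w = t • v := by
  have hXfin : FiniteDimensional ℝ X := .of_finrank_eq_succ hdim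
  have hrange : LinearMap.range (φ : X →ₗ[ℝ] ℝ) = ⊤ := by
    obtain ⟨v, hv⟩ : ∃ v, φ v ≠ 0 := by
      by_contra h
      push_neg at h
      exact hφ (by ext w; simp [h w])
    rw [LinearMap.range_eq_top]
    intro r
    exact ⟨(r / φ v) • v, by simp [div_mul_cancel₀, hv]⟩
  have hker : finrank ℝ (LinearMap.ker (φ : X →ₗ[ℝ] ℝ)) = 1 := by
    have h := LinearMap.finrank_range_add_finrank_ker (φ : X →ₗ[ℝ] ℝ)
    rw [hrange, finrank_top, hdim] at h
    have : finrank ℝ ℝ = 1 := Module.finrank_self ℝ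
    omega
  rw [finrank_eq_one_iff'] at hker
  obtain ⟨⟨v, hvmem⟩, hvne, hspan⟩ := hker
  refine ⟨v, by simpa [Submodule.mk_eq_zero] using hvne, hvmem, fun w hw => ?_⟩
  obtain ⟨t, ht⟩ := hspan ⟨w, hw⟩
  exact ⟨t, by simpa [Subtype.ext_iff] using ht.symm⟩

lemma extremePoints_finite_polyhedron (hdim : finrank ℝ X = 2) {ι : Type*} [Fintype ι]
    (φ : ι → X →L[ℝ] ℝ) (c : ι → ℝ) :
    (({p : X | ∀ j, φ j p ≤ c j}).extremePoints ℝ).Finite := by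
  classical
  set K := {p : X | ∀ j, φ j p ≤ c j} with hKdef
  have hnontriv : Nontrivial X := nontrivial_of_finrank_eq_succ hdim
  set S : ι → ι → Set X := fun j k => {p | φ j p = c j ∧ φ k p = c k} with hSdef
  set T : ι → ι → Set X := fun j k => if (S j k).Subsingleton then S j k else ∅ with hTdef
  have hTfin : ∀ j k, (T j k).Finite := by
    intro j k
    simp only [hTdef]
    by_cases h : (S j k).Subsingleton
    · rw [if_pos h]; exact h.finite
    · rw [if_neg h]; exact finite_empty
  apply Set.Finite.subset (Set.finite_iUnion fun j => Set.finite_iUnion fun k => hTfin j k)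
  intro e he
  rw [mem_extremePoints] at he
  obtain ⟨heK, hext⟩ := he
  by_cases hcase : ∃ j k, φ j e = c j ∧ φ k e = c k ∧ ∀ v, φ j v = 0 ∧ φ k v = 0 → v = 0
  · obtain ⟨j, k, hj, hk, hjk⟩ := hcase
    have hsub : (S j k).Subsingleton := by
      intro p hp q hq
      have := hjk (p - q) ⟨by simp [hp.1, hq.1], by simp [hp.2, hq.2]⟩
      exact sub_eq_zero.mp this
    refine mem_iUnion.mpr ⟨j, mem_iUnion.mpr ⟨k, ?_⟩⟩
    simp only [hTdef, if_pos hsub]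
    exact ⟨hj, hk⟩
  · push_neg at hcase
    -- find common kernel vector v₀ ≠ 0 for all active constraints
    have hcommon : ∃ v₀ : X, v₀ ≠ 0 ∧ ∀ j, φ j e = c j → φ j v₀ = 0 := by
      by_cases hall : ∀ j, φ j e = c j → φ j = 0
      · obtain ⟨v, hv⟩ := exists_ne (0 : X)
        exact ⟨v, hv, fun j hj => by rw [hall j hj]; rfl⟩
      · push_neg at hall
        obtain ⟨j₀, hj₀act, hj₀ne⟩ := hall
        obtain ⟨v₀, hv₀ne, hv₀ker, hv₀span⟩ := ker_span hdim (φ j₀) hj₀ne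
        refine ⟨v₀, hv₀ne, fun j hj => ?_⟩
        obtain ⟨v, hvprop, hvne⟩ := hcase j₀ j hj₀act hj
        obtain ⟨t, ht⟩ := hv₀span v hvprop.1
        have htne : t ≠ 0 := by
          rintro rfl
          simp at ht
          exact hvne ht
        have := hvprop.2
        rw [ht, map_smul] at this
        simpa [htne] using this
    obtain ⟨v₀, hv₀ne, hv₀⟩ := hcommon
    exfalso
    -- openness of slack constraints
    set A : Finset ι := Finset.univ.filter (fun j => φ j e < c j) with hAdef
    have hUopen : IsOpen (⋂ j ∈ A, {p : X | φ j p < c j}) :=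
      isOpen_biInter_finset fun j _ => isOpen_lt (φ j).continuous continuous_const
    have heU : e ∈ ⋂ j ∈ A, {p : X | φ j p < c j} := by
      simp only [mem_iInter, mem_setOf_eq]
      intro j hj
      exact (Finset.mem_filter.mp hj).2
    obtain ⟨ε, hεpos, hball⟩ := Metric.isOpen_iff.mp hUopen e heU
    set δ : ℝ := ε / (2 * (‖v₀‖ + 1)) with hδ
    have hδpos : 0 < δ := by
      apply div_pos hεpos
      positivity
    set w : X := δ • v₀ with hw
    have hwne : w ≠ 0 := smul_ne_zero (ne_of_gt hδpos) hv₀ne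
    have hwnorm : ‖w‖ < ε := by
      rw [hw, norm_smul, Real.norm_eq_abs, abs_of_pos hδpos, hδ]
      rw [div_mul_eq_mul_div, div_lt_iff₀ (by positivity)]
      nlinarith [norm_nonneg v₀, hεpos]
    have hmem : ∀ s : ℝ, |s| ≤ 1 → e + s • w ∈ K := by
      intro s hs
      intro j
      by_cases hact : φ j e = c j
      · have : φ j w = 0 := by rw [hw, map_smul, hv₀ j hact, smul_zero]
        rw [map_add, map_smul, this, smul_zero, add_zero, hact]
      · have hja : j ∈ A := by
          rw [hAdef, Finset.mem_filter]
          exact ⟨Finset.mem_univ j, lt_of_le_of_ne (heK j) hact⟩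
        have : e + s • w ∈ Metric.ball e ε := by
          rw [Metric.mem_ball, dist_eq_norm, add_sub_cancel_left, norm_smul, Real.norm_eq_abs]
          calc |s| * ‖w‖ ≤ 1 * ‖w‖ := by
                apply mul_le_mul_of_nonneg_right hs (norm_nonneg w)
          _ = ‖w‖ := one_mul _
          _ < ε := hwnorm
        have hmem2 := mem_iInter₂.mp (hball this) j hja
        exact le_of_lt hmem2
    have h1 : e + w ∈ K := by simpa using hmem 1 (by norm_num)
    have h2 : e - w ∈ K := by
      have := hmem (-1) (by norm_num)
      simpa [sub_eq_add_neg, neg_smul] using this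
    have hmid : e ∈ openSegment ℝ (e - w) (e + w) := by
      refine ⟨1/2, 1/2, by norm_num, by norm_num, by norm_num, ?_⟩
      have : (1/2 : ℝ) • (e - w) + (1/2 : ℝ) • (e + w) = e := by
        rw [smul_sub, smul_add]
        module
      exact this
    have hfin := (hext _ h2 _ h1 hmid).1
    rw [sub_eq_self] at hfin
    exact hwne hfin

lemma cone_halfplanes (hdim : finrank ℝ X = 2) (L : X →L[ℝ] ℝ) {a b : X}
    (ha : L a = 1) (hb : L b = 1) :
    ∃ π ρ : X →L[ℝ] ℝ, ∀ v : X,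
      (∃ s t : ℝ, 0 ≤ s ∧ 0 ≤ t ∧ v = s • a + t • b) ↔ (0 ≤ π v ∧ 0 ≤ ρ v ∧ 0 ≤ L v) := by
  have hXfin : FiniteDimensional ℝ X := .of_finrank_eq_succ hdim
  by_cases hli : LinearIndependent ℝ ![a, b]
  · -- independent case: coordinate functionals
    have hcard : Fintype.card (Fin 2) = finrank ℝ X := by simp [hdim]
    set B := basisOfLinearIndependentOfCardEqFinrank hli hcard with hB
    have hB0 : B 0 = a := by rw [hB, coe_basisOfLinearIndependentOfCardEqFinrank]; rfl
    have hB1 : B 1 = b := by rw [hB, coe_basisOfLinearIndependentOfCardEqFinrank]; rfl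
    refine ⟨LinearMap.toContinuousLinearMap (B.coord 0),
           LinearMap.toContinuousLinearMap (B.coord 1), fun v => ?_⟩
    simp only [LinearMap.coe_toContinuousLinearMap']
    constructor
    · rintro ⟨s, t, hs, ht, rfl⟩
      have h0 : B.coord 0 (s • a + t • b) = s := by
        rw [← hB0, ← hB1]
        simp [Basis.coord_apply, Basis.repr_self]
      have h1 : B.coord 1 (s • a + t • b) = t := by
        rw [← hB0, ← hB1]
        simp [Basis.coord_apply, Basis.repr_self]
      refine ⟨by rw [h0]; exact hs, by rw [h1]; exact ht, ?_⟩
      have : L (s • a + t • b) = s + t := by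
        simp [ha, hb]
      rw [this]
      linarith
    · rintro ⟨h0, h1, -⟩
      refine ⟨B.coord 0 v, B.coord 1 v, h0, h1, ?_⟩
      have := B.sum_repr v
      rw [Fin.sum_univ_two, hB0, hB1] at this
      simp only [Basis.coord_apply]
      exact this.symm
  · -- dependent case: b = a
    have hane : a ≠ 0 := fun h => by simp [h] at ha
    have hbne : b ≠ 0 := fun h => by simp [h] at hb
    have hba : b = a := by
      rw [linearIndependent_fin2] at hli
      push_neg at hli
      simp only [Matrix.cons_val_one, Matrix.head_cons, Matrix.cons_val_zero] at hli
      obtain ⟨r, hr⟩ := hli hbne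
      have hLr := congrArg L hr
      simp only [map_smul, smul_eq_mul, hb, ha, mul_one] at hLr
      rw [← hr, hLr, one_smul]
    rw [hba]
    -- find w outside span of a
    have hfrspan : finrank ℝ (ℝ ∙ a) < finrank ℝ X := by
      rw [finrank_span_singleton hane, hdim]; norm_num
    obtain ⟨w, hw⟩ := Submodule.exists_of_finrank_lt (ℝ ∙ a) hfrspan
    have hwa : ∀ r : ℝ, r • a ≠ w := by
      intro r hr
      have hmem : (1 : ℝ) • w ∈ ℝ ∙ a := by
        rw [one_smul, ← hr]
        exact Submodule.smul_mem _ r (Submodule.mem_span_singleton_self a)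
      exact hw 1 one_ne_zero hmem
    have hli2 : LinearIndependent ℝ ![w, a] := by
      rw [linearIndependent_fin2]
      exact ⟨hane, fun r => by simpa using hwa r⟩
    have hcard : Fintype.card (Fin 2) = finrank ℝ X := by simp [hdim]
    set B := basisOfLinearIndependentOfCardEqFinrank hli2 hcard with hB
    have hB0 : B 0 = w := by rw [hB, coe_basisOfLinearIndependentOfCardEqFinrank]; rfl
    have hB1 : B 1 = a := by rw [hB, coe_basisOfLinearIndependentOfCardEqFinrank]; rfl
    set ψ := LinearMap.toContinuousLinearMap (B.coord 0) with hψ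
    have hψa : ψ a = 0 := by
      rw [hψ]
      simp only [LinearMap.coe_toContinuousLinearMap']
      rw [← hB1, Basis.coord_apply, Basis.repr_self]
      simp
    have hker : ∀ v : X, ψ v = 0 → v = (B.coord 1 v) • a := by
      intro v hv
      have h2 := B.sum_repr v
      rw [Fin.sum_univ_two, hB0, hB1] at h2
      rw [hψ] at hv
      simp only [LinearMap.coe_toContinuousLinearMap'] at hv
      rw [Basis.coord_apply] at hv
      calc v = B.repr v 0 • w + B.repr v 1 • a := h2.symm
      _ = (B.coord 1 v) • a := by rw [hv, zero_smul, zero_add, Basis.coord_apply]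
    refine ⟨ψ, -ψ, fun v => ?_⟩
    constructor
    · rintro ⟨s, t, hs, ht, rfl⟩
      have hcomb : (s • a + t • a : X) = (s + t) • a := by module
      rw [hcomb]
      have hψ0 : ψ ((s + t) • a) = 0 := by rw [map_smul, hψa, smul_zero]
      refine ⟨by rw [hψ0], ?_, ?_⟩
      · rw [ContinuousLinearMap.neg_apply, hψ0, neg_zero]
      · rw [map_smul, ha, smul_eq_mul, mul_one]; linarith
    · rintro ⟨h0, h1, hL⟩
      rw [ContinuousLinearMap.neg_apply, neg_nonneg] at h1
      have hv0 : ψ v = 0 := le_antisymm h1 h0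
      obtain hveq := hker v hv0
      have hLv : L v = B.coord 1 v := by
        conv_lhs => rw [hveq]
        rw [map_smul, ha, smul_eq_mul, mul_one]
      refine ⟨B.coord 1 v, 0, ?_, le_refl 0, by rw [zero_smul, add_zero]; exact hveq⟩
      rw [← hLv]
      exact hL

end Aux

set_option maxHeartbeats 2000000 in
/-- In a two-dimensional real normed space, the Fermat–Torricelli set of finitely many
points is a convex polygon, possibly degenerating to a segment or a point: it is the
convex hull of a finite nonempty set of points. -/
theorem ft_is_convex_polygon
    {X : Type*} [NormedAddCommGroup X] [NormedSpace ℝ X]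
    (hdim : Module.finrank ℝ X = 2)
    {n : ℕ} (hn : 0 < n) (x : Fin n → X) :
    ∃ S : Set X, S.Finite ∧ S.Nonempty ∧ ftSet x = convexHull ℝ S := by
  classical
  have hXfin : FiniteDimensional ℝ X := .of_finrank_eq_succ hdim
  have hnontriv : Nontrivial X := nontrivial_of_finrank_eq_succ hdim
  set f : X → ℝ := fun p => ∑ i, ‖p - x i‖ with hf
  set M : Set X := ftSet x with hMdef
  have hMmem : ∀ p, p ∈ M ↔ ∀ q, f p ≤ f q := fun p => Iff.rfl
  -- basic convexity inequality for each term
  have hterm_conv : ∀ (p q : X) (a b : ℝ), 0 ≤ a → 0 ≤ b → a + b = 1 →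
      ∀ i, ‖(a • p + b • q) - x i‖ ≤ a * ‖p - x i‖ + b * ‖q - x i‖ := by
    intro p q a b ha hb hab i
    have hsplit : (a • p + b • q) - x i = a • (p - x i) + b • (q - x i) := by
      have h1 : a • (p - x i) + b • (q - x i) = a • p + b • q - (a + b) • x i := by module
      rw [h1, hab, one_smul]
    rw [hsplit]
    calc ‖a • (p - x i) + b • (q - x i)‖ ≤ ‖a • (p - x i)‖ + ‖b • (q - x i)‖ := norm_add_le _ _
    _ = a * ‖p - x i‖ + b * ‖q - x i‖ := by
        rw [norm_smul, norm_smul, Real.norm_eq_abs, Real.norm_eq_abs,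
          abs_of_nonneg ha, abs_of_nonneg hb]
  have hfconv : ∀ (p q : X) (a b : ℝ), 0 ≤ a → 0 ≤ b → a + b = 1 →
      f (a • p + b • q) ≤ a * f p + b * f q := by
    intro p q a b ha hb hab
    rw [hf]
    calc ∑ i, ‖(a • p + b • q) - x i‖ ≤ ∑ i, (a * ‖p - x i‖ + b * ‖q - x i‖) :=
          Finset.sum_le_sum fun i _ => hterm_conv p q a b ha hb hab i
    _ = a * ∑ i, ‖p - x i‖ + b * ∑ i, ‖q - x i‖ := by
        rw [Finset.sum_add_distrib, Finset.mul_sum, Finset.mul_sum]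
  have hfcont : Continuous f := by
    apply continuous_finset_sum
    intro i _
    exact (continuous_id.sub continuous_const).norm
  have hfnonneg : ∀ p, 0 ≤ f p := fun p => Finset.sum_nonneg fun i _ => norm_nonneg _
  have hterm_le : ∀ (p : X) (i : Fin n), ‖p - x i‖ ≤ f p := by
    intro p i
    exact Finset.single_le_sum (fun j _ => norm_nonneg (p - x j)) (Finset.mem_univ i)
  have hMconv : Convex ℝ M := by
    intro p hp q hq a b ha hb hab
    rw [hMmem] at hp hq ⊢
    intro r
    calc f (a • p + b • q) ≤ a * f p + b * f q := hfconv p q a b ha hb hab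
    _ ≤ a * f r + b * f r := by
        apply add_le_add
        · exact mul_le_mul_of_nonneg_left (hp r) ha
        · exact mul_le_mul_of_nonneg_left (hq r) hb
    _ = f r := by rw [← add_mul, hab, one_mul]
  -- existence of minimizer
  set i₀ : Fin n := ⟨0, hn⟩
  set R : ℝ := f (x i₀) with hR
  obtain ⟨p₀, hp₀B, hp₀min⟩ := (isCompact_closedBall (x i₀) R).exists_isMinOn
    ⟨x i₀, Metric.mem_closedBall_self (hfnonneg (x i₀))⟩ hfcont.continuousOn
  have hp₀ : p₀ ∈ M := by
    rw [hMmem]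
    intro q
    by_cases hq : q ∈ Metric.closedBall (x i₀) R
    · exact hp₀min hq
    · have h1 : R < ‖q - x i₀‖ := by
        rw [Metric.mem_closedBall, dist_eq_norm] at hq
        linarith [not_le.mp hq]
      have h2 : f p₀ ≤ R := hp₀min (Metric.mem_closedBall_self (hfnonneg (x i₀)))
      have h3 := hterm_le q i₀
      linarith
  have hMne : M.Nonempty := ⟨p₀, hp₀⟩
  have hMsub : M ⊆ Metric.closedBall (x i₀) R := by
    intro p hp
    rw [Metric.mem_closedBall, dist_eq_norm]
    calc ‖p - x i₀‖ ≤ f p := hterm_le p i₀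
    _ ≤ f (x i₀) := (hMmem p).mp hp (x i₀)
  have hMclosed : IsClosed M := by
    have : M = ⋂ q : X, {p : X | f p ≤ f q} := by
      ext p; simp [hMmem p, mem_iInter]
    rw [this]
    exact isClosed_iInter fun q => isClosed_le hfcont continuous_const
  have hMcompact : IsCompact M :=
    (isCompact_closedBall (x i₀) R).of_isClosed_subset hMclosed hMsub
  have hMconst : ∀ p ∈ M, ∀ q ∈ M, f p = f q := by
    intro p hp q hq
    exact le_antisymm ((hMmem p).mp hp q) ((hMmem q).mp hq p)
  by_cases hint : (interior M).Nonempty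
  · -- main case: interior of M is nonempty
    obtain ⟨u₀, hu₀⟩ := hint
    have hinf : (interior M).Infinite := by
      obtain ⟨ε, hεpos, hball⟩ := Metric.isOpen_iff.mp isOpen_interior u₀ hu₀
      obtain ⟨e, he⟩ := exists_ne (0 : X)
      have hinj : Set.InjOn (fun t : ℝ => u₀ + t • e) (Set.Ioo 0 (ε / (‖e‖ + 1))) := by
        intro s _ t _ hst
        simp only [add_right_inj] at hst
        exact smul_left_injective ℝ he hst
      have hmemb : ∀ t : ℝ, t ∈ Set.Ioo (0:ℝ) (ε / (‖e‖ + 1)) → u₀ + t • e ∈ interior M := by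
        intro t ht
        apply hball
        rw [Metric.mem_ball, dist_eq_norm, add_sub_cancel_left, norm_smul, Real.norm_eq_abs,
          abs_of_pos ht.1]
        have h2 : t < ε / (‖e‖ + 1) := ht.2
        have h3 : (0:ℝ) < ‖e‖ + 1 := by positivity
        calc t * ‖e‖ ≤ t * (‖e‖ + 1) := by nlinarith [ht.1]
        _ < (ε / (‖e‖ + 1)) * (‖e‖ + 1) := by
            apply mul_lt_mul_of_pos_right h2 h3
        _ = ε := div_mul_cancel₀ ε (ne_of_gt h3)
      have hIooinf : (Set.Ioo (0:ℝ) (ε / (‖e‖ + 1))).Infinite := by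
        apply Set.Ioo_infinite
        positivity
      apply Set.Infinite.mono _ (hIooinf.image hinj)
      rintro _ ⟨t, ht, rfl⟩
      exact hmemb t ht
    obtain ⟨u, hu⟩ := (hinf.diff (Set.finite_range x)).nonempty
    have huint : u ∈ interior M := hu.1
    have hux : u ∉ Set.range x := hu.2
    have huM : u ∈ M := interior_subset huint
    set m : ℝ := f u with hm
    have hmin : ∀ q, f u ≤ f q := (hMmem u).mp huM
    have hconstm : ∀ p ∈ M, f p = m := fun p hp => hMconst p hp u huM
    have hxine : ∀ i, u - x i ≠ 0 := fun i =>
      sub_ne_zero.mpr (fun heq => hux ⟨i, heq.symm⟩)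
    choose L hLnorm hLeq using fun i : Fin n => exists_dual_vector ℝ (u - x i) (norm_ne_zero_iff.mpr (hxine i))
    have hLle : ∀ (i : Fin n) (v : X), L i v ≤ ‖v‖ := by
      intro i v
      calc L i v ≤ |L i v| := le_abs_self _
      _ = ‖L i v‖ := (Real.norm_eq_abs _).symm
      _ ≤ ‖L i‖ * ‖v‖ := (L i).le_opNorm v
      _ = ‖v‖ := by rw [hLnorm i, one_mul]
    -- each distance function is affine on M
    have haff : ∀ p ∈ M, ∀ q ∈ M, ∀ a b : ℝ, 0 ≤ a → 0 ≤ b → a + b = 1 →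
        ∀ i, ‖(a • p + b • q) - x i‖ = a * ‖p - x i‖ + b * ‖q - x i‖ := by
      intro p hp q hq a b ha hb hab
      have hcombM : a • p + b • q ∈ M := hMconv hp hq ha hb hab
      have hsum : ∑ i, ‖(a • p + b • q) - x i‖ = ∑ i, (a * ‖p - x i‖ + b * ‖q - x i‖) := by
        have h1 : ∑ i, ‖(a • p + b • q) - x i‖ = m := hconstm _ hcombM
        have h2 : ∑ i, (a * ‖p - x i‖ + b * ‖q - x i‖) = m := by
          rw [Finset.sum_add_distrib, ← Finset.mul_sum, ← Finset.mul_sum]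
          have hfp : ∑ i, ‖p - x i‖ = m := hconstm p hp
          have hfq : ∑ i, ‖q - x i‖ = m := hconstm q hq
          rw [hfp, hfq, ← add_mul, hab, one_mul]
        rw [h1, h2]
      have hall := (Finset.sum_eq_sum_iff_of_le
        (fun i _ => hterm_conv p q a b ha hb hab i)).mp hsum
      intro i
      exact hall i (Finset.mem_univ i)
    -- the dual functional is exact on all of M
    have key1 : ∀ (i : Fin n), ∀ p ∈ M, L i (p - x i) = ‖p - x i‖ := by
      intro i p hp
      by_cases hpu : p = u
      · rw [hpu]; exact_mod_cast hLeq i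
      · obtain ⟨ε, hεpos, hball⟩ := Metric.isOpen_iff.mp isOpen_interior u huint
        have hupne : u - p ≠ 0 := sub_ne_zero.mpr (Ne.symm hpu)
        have hupn : (0:ℝ) < ‖u - p‖ := norm_pos_iff.mpr hupne
        set ε' : ℝ := ε / (2 * ‖u - p‖) with hε'
        have hε'pos : 0 < ε' := div_pos hεpos (by positivity)
        set q : X := u + ε' • (u - p) with hq
        have hqM : q ∈ M := by
          apply interior_subset
          apply hball
          rw [Metric.mem_ball, dist_eq_norm, hq, add_sub_cancel_left, norm_smul,
            Real.norm_eq_abs, abs_of_pos hε'pos, hε']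
          rw [div_mul_eq_mul_div, div_lt_iff₀ (by positivity)]
          nlinarith
        set a : ℝ := ε' / (1 + ε') with ha
        set b : ℝ := 1 / (1 + ε') with hb
        have hden : (0:ℝ) < 1 + ε' := by linarith
        have hapos : 0 < a := div_pos hε'pos hden
        have hbpos : 0 < b := div_pos one_pos hden
        have hab : a + b = 1 := by rw [ha, hb]; field_simp; ring
        have hu_comb : a • p + b • q = u := by
          rw [hq, ha, hb]
          match_scalars <;> field_simp <;> try ring
        have heq := haff p hp q hqM a b hapos.le hbpos.le hab i
        rw [hu_comb] at heq
        have hlin : L i (u - x i) = a * L i (p - x i) + b * L i (q - x i) := by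
          have hsplit : u - x i = a • (p - x i) + b • (q - x i) := by
            rw [← hu_comb]
            have h5 : a • (p - x i) + b • (q - x i)
                = a • p + b • q - (a + b) • x i := by module
            rw [h5, hab, one_smul]
          rw [hsplit, map_add, map_smul, map_smul, smul_eq_mul, smul_eq_mul]
        have h0 : L i (u - x i) = ‖u - x i‖ := by exact_mod_cast hLeq i
        have hgp : L i (p - x i) ≤ ‖p - x i‖ := hLle i _
        have hgq : L i (q - x i) ≤ ‖q - x i‖ := hLle i _
        apply le_antisymm hgp
        nlinarith [hapos, hbpos]
    -- faces of the unit ball: compact convex subsets of a line, hence segments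
    have hface : ∀ i : Fin n, ∃ a b : X, L i a = 1 ∧ L i b = 1 ∧ ‖a‖ ≤ 1 ∧ ‖b‖ ≤ 1 ∧
        ({v : X | ‖v‖ ≤ 1 ∧ L i v = 1} = segment ℝ a b) := by
      intro i
      set F : Set X := {v : X | ‖v‖ ≤ 1 ∧ L i v = 1} with hF
      have hFclosed : IsClosed F :=
        (isClosed_le continuous_norm continuous_const).inter
          (isClosed_eq (L i).continuous continuous_const)
      have hFsub : F ⊆ Metric.closedBall 0 1 := fun v hv => by
        simpa [Metric.mem_closedBall, dist_eq_norm] using hv.1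
      have hFcompact : IsCompact F :=
        (isCompact_closedBall (0:X) 1).of_isClosed_subset hFclosed hFsub
      have hFconv : Convex ℝ F := by
        intro v hv w hw a b hha hhb hhab
        constructor
        · calc ‖a • v + b • w‖ ≤ ‖a • v‖ + ‖b • w‖ := norm_add_le _ _
          _ = a * ‖v‖ + b * ‖w‖ := by
              rw [norm_smul, norm_smul, Real.norm_eq_abs, Real.norm_eq_abs,
                abs_of_nonneg hha, abs_of_nonneg hhb]
          _ ≤ a * 1 + b * 1 := by
              apply add_le_add
              · exact mul_le_mul_of_nonneg_left hv.1 hha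
              · exact mul_le_mul_of_nonneg_left hw.1 hhb
          _ = 1 := by rw [mul_one, mul_one, hhab]
        · rw [map_add, map_smul, map_smul, smul_eq_mul, smul_eq_mul, hv.2, hw.2,
            mul_one, mul_one, hhab]
      have hnxu : (0:ℝ) < ‖u - x i‖ := norm_pos_iff.mpr (hxine i)
      set c : X := ‖u - x i‖⁻¹ • (u - x i) with hc
      have hcF : c ∈ F := by
        constructor
        · rw [hc, norm_smul, Real.norm_eq_abs, abs_of_pos (inv_pos.mpr hnxu),
            inv_mul_cancel₀ (ne_of_gt hnxu)]
        · rw [hc, map_smul, smul_eq_mul]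
          have h0 : L i (u - x i) = ‖u - x i‖ := by exact_mod_cast hLeq i
          rw [h0, inv_mul_cancel₀ (ne_of_gt hnxu)]
      have hFne : F.Nonempty := ⟨c, hcF⟩
      have hLine : (L i) ≠ 0 := by
        intro h0
        have h1 : L i (u - x i) = ‖u - x i‖ := by exact_mod_cast hLeq i
        rw [h0] at h1
        simp only [ContinuousLinearMap.zero_apply] at h1
        exact ne_of_gt hnxu h1.symm
      obtain ⟨d, hdne, hdker, hdspan⟩ := ker_span hdim (L i) hLine
      have hlineF : ∀ v ∈ F, ∃ t : ℝ, v = c + t • d := by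
        intro v hv
        obtain ⟨t, ht⟩ := hdspan (v - c) (by rw [map_sub, hv.2, hcF.2, sub_self])
        exact ⟨t, by rw [← ht]; abel⟩
      obtain ⟨a, b, haF, hbF, hseg⟩ := segment_of_line hFne hFcompact hFconv hlineF
      exact ⟨a, b, haF.2, hbF.2, haF.1, hbF.1, hseg⟩
    choose va vb hva1 hvb1 hvan hvbn hFseg using hface
    -- cone characterization
    have hcone : ∀ (i : Fin n) (v : X),
        L i v = ‖v‖ ↔ ∃ s t : ℝ, 0 ≤ s ∧ 0 ≤ t ∧ v = s • va i + t • vb i := by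
      intro i v
      constructor
      · intro hv
        by_cases h0 : v = 0
        · exact ⟨0, 0, le_refl 0, le_refl 0, by simp [h0]⟩
        · have hnv : (0:ℝ) < ‖v‖ := norm_pos_iff.mpr h0
          have hwseg : ‖v‖⁻¹ • v ∈ segment ℝ (va i) (vb i) := by
            rw [← hFseg i]
            constructor
            · rw [norm_smul, Real.norm_eq_abs, abs_of_pos (inv_pos.mpr hnv),
                inv_mul_cancel₀ (ne_of_gt hnv)]
            · rw [map_smul, smul_eq_mul, hv, inv_mul_cancel₀ (ne_of_gt hnv)]
          obtain ⟨s, t, hs, ht, hst, heq⟩ := hwseg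
          refine ⟨s * ‖v‖, t * ‖v‖, mul_nonneg hs hnv.le, mul_nonneg ht hnv.le, ?_⟩
          calc v = ‖v‖ • (‖v‖⁻¹ • v) := by
                rw [smul_smul, mul_inv_cancel₀ (ne_of_gt hnv), one_smul]
          _ = ‖v‖ • (s • va i + t • vb i) := by rw [heq]
          _ = (s * ‖v‖) • va i + (t * ‖v‖) • vb i := by
              rw [smul_add, smul_smul, smul_smul, mul_comm ‖v‖ s, mul_comm ‖v‖ t]
      · rintro ⟨s, t, hs, ht, rfl⟩
        have hL : L i (s • va i + t • vb i) = s + t := by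
          rw [map_add, map_smul, map_smul, smul_eq_mul, smul_eq_mul, hva1, hvb1,
            mul_one, mul_one]
        apply le_antisymm (hLle i _)
        rw [hL]
        calc ‖s • va i + t • vb i‖ ≤ ‖s • va i‖ + ‖t • vb i‖ := norm_add_le _ _
        _ = s * ‖va i‖ + t * ‖vb i‖ := by
            rw [norm_smul, norm_smul, Real.norm_eq_abs, Real.norm_eq_abs,
              abs_of_nonneg hs, abs_of_nonneg ht]
        _ ≤ s * 1 + t * 1 := by
            apply add_le_add
            · exact mul_le_mul_of_nonneg_left (hvan i) hs
            · exact mul_le_mul_of_nonneg_left (hvbn i) ht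
        _ = s + t := by rw [mul_one, mul_one]
    choose π ρ hchar using fun i : Fin n => cone_halfplanes hdim (L i) (hva1 i) (hvb1 i)
    have hKi : ∀ (i : Fin n) (p : X), L i (p - x i) = ‖p - x i‖ ↔
        (0 ≤ π i (p - x i) ∧ 0 ≤ ρ i (p - x i) ∧ 0 ≤ L i (p - x i)) :=
      fun i p => (hcone i _).trans (hchar i _)
    -- the polyhedron
    set A : X →L[ℝ] ℝ := ∑ i, L i with hA
    set cA : ℝ := m + ∑ i, L i (x i) with hcA
    have hAapply : ∀ p : X, A p = ∑ i, L i p := by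
      intro p
      rw [hA]
      exact ContinuousLinearMap.sum_apply _ _ _
    have hAsub : ∀ p : X, ∑ i, L i (p - x i) = A p - ∑ i, L i (x i) := by
      intro p
      rw [hAapply, ← Finset.sum_sub_distrib]
      exact Finset.sum_congr rfl fun i _ => map_sub _ _ _
    set Φ : (Fin n ⊕ Fin n ⊕ Fin n) ⊕ Bool → X →L[ℝ] ℝ :=
      Sum.elim (Sum.elim (fun i => -(π i)) (Sum.elim (fun i => -(ρ i)) (fun i => -(L i))))
        (fun s => if s then A else -A) with hΦ
    set C : (Fin n ⊕ Fin n ⊕ Fin n) ⊕ Bool → ℝ :=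
      Sum.elim (Sum.elim (fun i => -(π i (x i))) (Sum.elim (fun i => -(ρ i (x i)))
        (fun i => -(L i (x i))))) (fun s => if s then cA else -cA) with hC
    have hMK : M = {p : X | ∀ j, Φ j p ≤ C j} := by
      ext p
      simp only [mem_setOf_eq]
      constructor
      · intro hp j
        rcases j with (i | i | i) | s
        · have h3 := ((hKi i p).mp (key1 i p hp)).1
          rw [map_sub] at h3
          simp only [hΦ, hC, Sum.elim_inl, ContinuousLinearMap.neg_apply]
          linarith
        · have h3 := ((hKi i p).mp (key1 i p hp)).2.1
          rw [map_sub] at h3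
          simp only [hΦ, hC, Sum.elim_inl, Sum.elim_inr, ContinuousLinearMap.neg_apply]
          linarith
        · have h3 := ((hKi i p).mp (key1 i p hp)).2.2
          rw [map_sub] at h3
          simp only [hΦ, hC, Sum.elim_inl, Sum.elim_inr, ContinuousLinearMap.neg_apply]
          linarith
        · have hfp : ∑ i, ‖p - x i‖ = m := hconstm p hp
          have hsum : ∑ i, L i (p - x i) = m := by
            rw [← hfp]
            exact Finset.sum_congr rfl fun i _ => key1 i p hp
          have hAp : A p = cA := by
            have h6 := hAsub p
            rw [hsum] at h6
            rw [hcA]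
            linarith
          rcases s with _ | _ <;>
            simp only [hΦ, hC, Sum.elim_inr, if_true, if_false, Bool.false_eq_true,
              ContinuousLinearMap.neg_apply, hAp, le_refl, neg_le_neg_iff]
      · intro hp
        have hLeqi : ∀ i, L i (p - x i) = ‖p - x i‖ := by
          intro i
          apply (hKi i p).mpr
          have h0 := hp (Sum.inl (Sum.inl i))
          have h1 := hp (Sum.inl (Sum.inr (Sum.inl i)))
          have h2 := hp (Sum.inl (Sum.inr (Sum.inr i)))
          simp only [hΦ, hC, Sum.elim_inl, Sum.elim_inr,
            ContinuousLinearMap.neg_apply, neg_le_neg_iff] at h0 h1 h2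
          refine ⟨?_, ?_, ?_⟩
          · rw [map_sub]; linarith
          · rw [map_sub]; linarith
          · rw [map_sub]; linarith
        have hge := hp (Sum.inr true)
        have hle := hp (Sum.inr false)
        simp only [hΦ, hC, Sum.elim_inr, if_true, if_false, Bool.false_eq_true,
          ContinuousLinearMap.neg_apply, neg_le_neg_iff] at hge hle
        have hAp : A p = cA := le_antisymm hge hle
        have hfp : ∑ i, ‖p - x i‖ = m := by
          calc ∑ i, ‖p - x i‖ = ∑ i, L i (p - x i) :=
                Finset.sum_congr rfl fun i _ => (hLeqi i).symm
          _ = A p - ∑ i, L i (x i) := hAsub p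
          _ = m := by rw [hAp, hcA]; ring
        rw [hMmem]
        intro q
        have h7 : f p = m := hfp
        rw [h7]
        exact hmin q
    have hEfin : (M.extremePoints ℝ).Finite := by
      rw [hMK]
      exact extremePoints_finite_polyhedron hdim Φ C
    have hKM : closure (convexHull ℝ (M.extremePoints ℝ)) = M :=
      closure_convexHull_extremePoints hMcompact hMconv
    have hclosedE : IsClosed (convexHull ℝ (M.extremePoints ℝ)) :=
      hEfin.isClosed_convexHull (𝕜 := ℝ)
    have hMeq : M = convexHull ℝ (M.extremePoints ℝ) := by
      conv_lhs => rw [← hKM]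
      exact hclosedE.closure_eq
    have hEne : (M.extremePoints ℝ).Nonempty := by
      rcases Set.eq_empty_or_nonempty (M.extremePoints ℝ) with h | h
      · exfalso
        rw [h, convexHull_empty] at hMeq
        exact hMne.ne_empty hMeq
      · exact h
    exact ⟨M.extremePoints ℝ, hEfin, hEne, hMeq⟩
  · -- degenerate case : M lies in a line
    have hspan : affineSpan ℝ M ≠ ⊤ := by
      intro h
      exact hint ((hMconv.interior_nonempty_iff_affineSpan_eq_top).mpr h)
    have hvs : vectorSpan ℝ M ≠ ⊤ := by
      intro h
      exact hspan ((AffineSubspace.affineSpan_eq_top_iff_vectorSpan_eq_top_of_nonempty ℝ X X hMne).mpr h)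
    have hvsfr : finrank ℝ (vectorSpan ℝ M) ≤ 1 := by
      by_contra h
      push_neg at h
      have hle : finrank ℝ (vectorSpan ℝ M) ≤ 2 := hdim ▸ Submodule.finrank_le _
      have : finrank ℝ (vectorSpan ℝ M) = 2 := le_antisymm hle h
      exact hvs (Submodule.eq_top_of_finrank_eq (by rw [this, hdim]))
    have hline : ∃ d : X, ∀ p ∈ M, ∃ t : ℝ, p = p₀ + t • d := by
      rcases Nat.lt_or_ge (finrank ℝ (vectorSpan ℝ M)) 1 with h0 | h1
      · refine ⟨0, fun p hp => ⟨0, ?_⟩⟩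
        have hbot : vectorSpan ℝ M = ⊥ := by
          rw [← Submodule.finrank_eq_zero (R := ℝ)]
          omega
        have := vsub_mem_vectorSpan ℝ hp hp₀
        rw [hbot, Submodule.mem_bot] at this
        have hpq : p - p₀ = 0 := this
        rw [smul_zero, add_zero, ← sub_eq_zero]
        simpa using hpq
      · have h1' : finrank ℝ (vectorSpan ℝ M) = 1 := le_antisymm hvsfr h1
        rw [finrank_eq_one_iff'] at h1'
        obtain ⟨⟨d, hdmem⟩, hdne, hdspan⟩ := h1'
        refine ⟨d, fun p hp => ?_⟩
        have hmem := vsub_mem_vectorSpan ℝ hp hp₀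
        obtain ⟨t, ht⟩ := hdspan ⟨p -ᵥ p₀, hmem⟩
        refine ⟨t, ?_⟩
        have : (t : ℝ) • d = p - p₀ := by
          have := congrArg Subtype.val ht
          simpa using this
        rw [this]
        abel
    obtain ⟨d, hlined⟩ := hline
    obtain ⟨a, b, haM, hbM, hseg⟩ := segment_of_line hMne hMcompact hMconv hlined
    refine ⟨{a, b}, (Set.finite_singleton b).insert a, ⟨a, by simp⟩, ?_⟩
    rw [convexHull_pair, ← hseg]
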